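/- arXiv:1409.0139 — 2 statements merged into one kernel-verified Lean document; each statement's English description precedes it below -/
import Mathlib

section
/- With σ and ξ as above, for every continuous function F on [0, L) and every x ∈ [0, L): ∫₀^{σ(x)} F(ξ(t)) dt = ∫₀^x F(t)·(1 + w(t)²) dt + ∫_{[0,x)} F dυ. -/
open MeasureTheory Set
open scoped ENNReal NNReal

/-- Substitution formula for the generalized inverse `ξ` of
`σ(x) = x + ∫₀^x w² + υ([0,x))`: for every continuous `F` on `[0,L)` and `x ∈ [0,L)`,
`∫₀^{σ(x)} F(ξ(t)) dt = ∫₀^x F(t)(1 + w(t)²) dt + ∫_{[0,x)} F dυ`. -/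
theorem stmt_8 (L : ℝ≥0∞) (hL : 0 < L) (w : ℝ → ℝ) (υ : Measure ℝ)
    (hw : ∀ x : ℝ, 0 ≤ x → ENNReal.ofReal x < L →
      IntegrableOn (fun t => w t ^ 2) (Set.Ioc 0 x) volume)
    (hυ : ∀ x : ℝ, 0 ≤ x → ENNReal.ofReal x < L → υ (Set.Ico 0 x) < ⊤)
    (σ ξ : ℝ → ℝ)
    (hσ : ∀ x : ℝ, σ x = x + (∫ t in (0:ℝ)..x, w t ^ 2) + (υ (Set.Ico 0 x)).toReal)
    (hξ : ∀ s : ℝ, ξ s = sSup {x : ℝ | 0 ≤ x ∧ ENNReal.ofReal x < L ∧ σ x ≤ s}) :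
    ∀ F : ℝ → ℝ, ContinuousOn F {t : ℝ | 0 ≤ t ∧ ENNReal.ofReal t < L} →
      ∀ x : ℝ, 0 ≤ x → ENNReal.ofReal x < L →
        ∫ t in (0:ℝ)..(σ x), F (ξ t) =
          (∫ t in (0:ℝ)..x, F t * (1 + w t ^ 2)) + ∫ t in Set.Ico 0 x, F t ∂υ := by
  intro F hFc x hx0 hxL
  have hσz : σ 0 = 0 := by simp [hσ 0]
  rcases eq_or_lt_of_le hx0 with hx0' | hxpos
  · rw [← hx0', hσz]
    simp
  -- ### basic facts
  have hmemL : ∀ c : ℝ, c ≤ x → ENNReal.ofReal c < L :=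
    fun c h => lt_of_le_of_lt (ENNReal.ofReal_le_ofReal h) hxL
  have hσge : ∀ y : ℝ, 0 ≤ y → y ≤ σ y := by
    intro y hy
    rw [hσ y]
    have h1 : 0 ≤ ∫ t in (0:ℝ)..y, w t ^ 2 :=
      intervalIntegral.integral_nonneg hy (fun u _ => sq_nonneg _)
    have h2 : (0:ℝ) ≤ (υ (Set.Ico 0 y)).toReal := ENNReal.toReal_nonneg
    linarith
  have hbdd : ∀ s : ℝ, BddAbove {y : ℝ | 0 ≤ y ∧ ENNReal.ofReal y < L ∧ σ y ≤ s} :=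
    fun s => ⟨s, fun y hy => le_trans (hσge y hy.1) hy.2.2⟩
  have hξ_ge : ∀ s c : ℝ, 0 ≤ c → ENNReal.ofReal c < L → σ c ≤ s → c ≤ ξ s := by
    intro s c h1 h2 h3
    rw [hξ s]
    exact le_csSup (hbdd s) ⟨h1, h2, h3⟩
  have hL0 : ENNReal.ofReal 0 < L := by simpa using hL
  have hξ0 : ∀ s : ℝ, 0 ≤ s → 0 ≤ ξ s := fun s hs =>
    hξ_ge s 0 le_rfl hL0 (by simpa [hσz] using hs)
  have hwx := hw x hx0 hxL
  have hwsub : ∀ a b : ℝ, 0 ≤ a → b ≤ x →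
      IntegrableOn (fun t => w t ^ 2) (Set.Ioc a b) volume :=
    fun a b ha hb => hwx.mono_set (Set.Ioc_subset_Ioc ha hb)
  -- interval integrability and splitting
  have hii : ∀ a b : ℝ, 0 ≤ a → a ≤ b → ENNReal.ofReal b < L →
      IntervalIntegrable (fun t => w t ^ 2) volume a b := by
    intro a b ha hab hbL
    rw [intervalIntegrable_iff_integrableOn_Ioc_of_le hab]
    exact (hw b (ha.trans hab) hbL).mono_set (Set.Ioc_subset_Ioc ha le_rfl)
  have hsplit : ∀ a b : ℝ, 0 ≤ a → a ≤ b → ENNReal.ofReal b < L →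
      (∫ t in (0:ℝ)..b, w t ^ 2) = (∫ t in (0:ℝ)..a, w t ^ 2) + ∫ t in Set.Ioc a b, w t ^ 2 := by
    intro a b ha hab hbL
    have haL : ENNReal.ofReal a < L := lt_of_le_of_lt (ENNReal.ofReal_le_ofReal hab) hbL
    have h2 : IntervalIntegrable (fun t => w t ^ 2) volume a b := by
      rw [intervalIntegrable_iff_integrableOn_Ioc_of_le hab]
      exact (hw b (ha.trans hab) hbL).mono_set (Set.Ioc_subset_Ioc ha le_rfl)
    rw [← (intervalIntegral.integral_add_adjacent_intervals (hii 0 a le_rfl ha haL) h2),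
      intervalIntegral.integral_of_le hab]
  have hσmono : ∀ a b : ℝ, 0 ≤ a → a ≤ b → ENNReal.ofReal b < L → σ a ≤ σ b := by
    intro a b ha hab hbL
    have haL : ENNReal.ofReal a < L := lt_of_le_of_lt (ENNReal.ofReal_le_ofReal hab) hbL
    have hb0 : 0 ≤ b := ha.trans hab
    rw [hσ a, hσ b, hsplit a b ha hab hbL]
    have h3 : 0 ≤ ∫ t in Set.Ioc a b, w t ^ 2 :=
      setIntegral_nonneg measurableSet_Ioc (fun u _ => sq_nonneg _)
    have h4 : (υ (Set.Ico 0 a)).toReal ≤ (υ (Set.Ico 0 b)).toReal :=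
      ENNReal.toReal_mono (hυ b hb0 hbL).ne (measure_mono (Set.Ico_subset_Ico_right hab))
    linarith
  -- ### left continuity of σ and upper bound for ξ
  have hσ_left : ∀ c : ℝ, 0 < c → c ≤ x → ∀ s : ℝ,
      (∀ c' : ℝ, 0 ≤ c' → c' < c → σ c' ≤ s) → σ c ≤ s := by
    intro c hc0 hcx s hs
    set u : ℕ → ℝ := fun n => c - c / (n + 1) with hu
    have hun : ∀ n : ℕ, 0 ≤ u n ∧ u n < c := by
      intro n
      have h1 : (0:ℝ) < (n:ℝ) + 1 := by positivity
      constructor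
      · have : c / (n + 1) ≤ c / 1 := by
          apply div_le_div_of_nonneg_left hc0.le one_pos
          simpa using le_add_of_nonneg_left (Nat.cast_nonneg n)
        simp only [hu]
        simp only [div_one] at this
        linarith
      · have : 0 < c / (n + 1) := div_pos hc0 h1
        simp only [hu]; linarith
    have hu_mono : Monotone u := by
      intro m n hmn
      simp only [hu]
      have h1 : (0:ℝ) < (m:ℝ) + 1 := by positivity
      have : c / ((n:ℝ) + 1) ≤ c / ((m:ℝ) + 1) := by
        apply div_le_div_of_nonneg_left hc0.le h1
        have := (Nat.cast_le (α := ℝ)).2 hmn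
        linarith
      linarith
    have hu_tend : Filter.Tendsto u Filter.atTop (nhds c) := by
      have h0 : Filter.Tendsto (fun n : ℕ => c / ((n:ℝ) + 1)) Filter.atTop (nhds 0) := by
        have h1 := (tendsto_const_div_atTop_nhds_zero_nat c).comp
          (Filter.tendsto_add_atTop_nat 1)
        apply h1.congr
        intro n
        simp only [Function.comp_apply]
        push_cast
        ring
      have := Filter.Tendsto.sub (tendsto_const_nhds (x := c) (f := Filter.atTop (α := ℕ))) h0
      simpa using this
    -- σ (u n) tends to σ c
    have hwIcc : IntegrableOn (fun t => w t ^ 2) (Set.Icc 0 x) volume := by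
      rw [integrableOn_Icc_iff_integrableOn_Ioc]
      exact hwx
    have hG : ContinuousOn (fun y => ∫ t in Set.Ioc 0 y, w t ^ 2) (Set.Icc 0 x) :=
      intervalIntegral.continuousOn_primitive hwIcc
    have hcmem : c ∈ Set.Icc 0 x := ⟨hc0.le, hcx⟩
    have hu_tend' : Filter.Tendsto u Filter.atTop (nhdsWithin c (Set.Icc 0 x)) := by
      apply tendsto_nhdsWithin_of_tendsto_nhds_of_eventually_within u hu_tend
      filter_upwards with n
      exact ⟨(hun n).1, ((hun n).2.le).trans hcx⟩
    have hint_tend : Filter.Tendsto (fun n => ∫ t in Set.Ioc 0 (u n), w t ^ 2)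
        Filter.atTop (nhds (∫ t in Set.Ioc 0 c, w t ^ 2)) :=
      (hG c hcmem).tendsto.comp hu_tend'
    have hUnion : Set.Ico 0 c = ⋃ n, Set.Ico 0 (u n) := by
      apply Set.Subset.antisymm
      · intro t ht
        obtain ⟨n, hn⟩ := (hu_tend.eventually (eventually_gt_nhds ht.2)).exists
        exact Set.mem_iUnion.2 ⟨n, ht.1, hn⟩
      · exact Set.iUnion_subset (fun n => Set.Ico_subset_Ico_right (hun n).2.le)
    have hmeas_tend : Filter.Tendsto (fun n => υ (Set.Ico 0 (u n))) Filter.atTop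
        (nhds (υ (Set.Ico 0 c))) := by
      rw [hUnion]
      exact tendsto_measure_iUnion_atTop (fun m n hmn => Set.Ico_subset_Ico_right (hu_mono hmn))
    have hmeas_fin : υ (Set.Ico 0 c) ≠ ⊤ :=
      (lt_of_le_of_lt (measure_mono (Set.Ico_subset_Ico_right hcx)) (hυ x hx0 hxL)).ne
    have htoReal_tend : Filter.Tendsto (fun n => (υ (Set.Ico 0 (u n))).toReal) Filter.atTop
        (nhds ((υ (Set.Ico 0 c)).toReal)) :=
      (ENNReal.tendsto_toReal hmeas_fin).comp hmeas_tend
    have hσu_tend : Filter.Tendsto (fun n => σ (u n)) Filter.atTop (nhds (σ c)) := by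
      have heq : ∀ n, σ (u n) = u n + (∫ t in Set.Ioc 0 (u n), w t ^ 2)
          + (υ (Set.Ico 0 (u n))).toReal := by
        intro n
        rw [hσ (u n), intervalIntegral.integral_of_le (hun n).1]
      have heqc : σ c = c + (∫ t in Set.Ioc 0 c, w t ^ 2) + (υ (Set.Ico 0 c)).toReal := by
        rw [hσ c, intervalIntegral.integral_of_le hc0.le]
      simp only [heq, heqc]
      exact ((hu_tend.add hint_tend).add htoReal_tend)
    exact le_of_tendsto' hσu_tend (fun n => hs (u n) (hun n).1 (hun n).2)
  have hξ_le : ∀ s c : ℝ, 0 ≤ s → 0 < c → c ≤ x → c ≤ ξ s → σ c ≤ s := by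
    intro s c hs hc0 hcx hcξ
    apply hσ_left c hc0 hcx s
    intro c' hc'0 hc'c
    rcases eq_or_lt_of_le hc'0 with h | h
    · rw [← h, hσz]; exact hs
    have hne : {y : ℝ | 0 ≤ y ∧ ENNReal.ofReal y < L ∧ σ y ≤ s}.Nonempty :=
      ⟨0, le_rfl, hL0, by rw [hσz]; exact hs⟩
    have hlt : c' < sSup {y : ℝ | 0 ≤ y ∧ ENNReal.ofReal y < L ∧ σ y ≤ s} := by
      rw [← hξ s]
      exact lt_of_lt_of_le hc'c hcξ
    obtain ⟨y, hy, hy2⟩ := exists_lt_of_lt_csSup hne hlt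
    exact le_trans (hσmono c' y hc'0 hy2.le hy.2.1) hy.2.2
  have hσx0 : 0 ≤ σ x := hx0.trans (hσge x hx0)
  have hξ_lt_x : ∀ t : ℝ, 0 ≤ t → t < σ x → ξ t < x := by
    intro t ht hts
    by_contra h
    push_neg at h
    exact absurd (hξ_le t x ht hxpos le_rfl h) (not_le.2 hts)
  -- ### the measures
  have hwae : AEMeasurable (fun t => w t ^ 2) (volume.restrict (Set.Ioc 0 x)) :=
    hwx.aemeasurable
  set q : ℝ → ℝ := hwae.mk _ with hqdef
  have hq : Measurable q := hwae.measurable_mk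
  have hqae : (fun t => w t ^ 2) =ᵐ[volume.restrict (Set.Ioc 0 x)] q := hwae.ae_eq_mk
  set ν : Measure ℝ := volume.restrict (Set.Ico 0 (σ x)) with hνdef
  set wd : Measure ℝ := (volume.restrict (Set.Ioc 0 x)).withDensity
    (fun t => ENNReal.ofReal (q t)) with hwddef
  set m : Measure ℝ := (volume.restrict (Set.Ico 0 x) + wd) + υ.restrict (Set.Ico 0 x)
    with hmdef
  -- the key computation
  have hqint : ∀ a b : ℝ, 0 ≤ a → a ≤ b → b ≤ x →
      (∫⁻ t in Set.Ioc a b, ENNReal.ofReal (q t)) =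
        ENNReal.ofReal (∫ t in Set.Ioc a b, w t ^ 2) := by
    intro a b ha hab hbx
    have hsub : Set.Ioc a b ⊆ Set.Ioc 0 x := Set.Ioc_subset_Ioc ha hbx
    have hqr : (fun t => w t ^ 2) =ᵐ[volume.restrict (Set.Ioc a b)] q :=
      ae_restrict_of_ae_restrict_of_subset hsub hqae
    rw [ofReal_integral_eq_lintegral_ofReal (hwsub a b ha hbx)
      (Filter.Eventually.of_forall (fun t => sq_nonneg _))]
    apply lintegral_congr_ae
    filter_upwards [hqr] with t ht
    rw [ht]
  have hkey : ∀ a b : ℝ, 0 ≤ a → a ≤ b → b ≤ x →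
      volume (Set.Ico (σ a) (σ b)) =
        ENNReal.ofReal (b - a) + (∫⁻ t in Set.Ioc a b, ENNReal.ofReal (q t))
          + υ (Set.Ico a b) := by
    intro a b ha hab hbx
    have hb0 : 0 ≤ b := ha.trans hab
    have haL : ENNReal.ofReal a < L := hmemL a (hab.trans hbx)
    have hbL : ENNReal.ofReal b < L := hmemL b hbx
    have hAfin : υ (Set.Ico 0 a) ≠ ⊤ := (hυ a ha haL).ne
    have hBfin : υ (Set.Ico 0 b) ≠ ⊤ := (hυ b hb0 hbL).ne
    have hdiffset : Set.Ico 0 b \ Set.Ico 0 a = Set.Ico a b := by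
      ext t
      simp only [Set.mem_diff, Set.mem_Ico, not_and, not_lt]
      constructor
      · rintro ⟨⟨h1, h2⟩, h3⟩
        exact ⟨h3 h1, h2⟩
      · rintro ⟨h1, h2⟩
        exact ⟨⟨ha.trans h1, h2⟩, fun _ => h1⟩
    have hdiff : υ (Set.Ico a b) = υ (Set.Ico 0 b) - υ (Set.Ico 0 a) := by
      rw [← hdiffset]
      exact measure_diff (Set.Ico_subset_Ico_right hab)
        measurableSet_Ico.nullMeasurableSet hAfin
    have harith : σ b - σ a = (b - a) + (∫ t in Set.Ioc a b, w t ^ 2)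
        + ((υ (Set.Ico 0 b)).toReal - (υ (Set.Ico 0 a)).toReal) := by
      rw [hσ a, hσ b, hsplit a b ha hab hbL]
      ring
    have hint_nn : 0 ≤ ∫ t in Set.Ioc a b, w t ^ 2 :=
      setIntegral_nonneg measurableSet_Ioc (fun u _ => sq_nonneg _)
    have htR : (υ (Set.Ico 0 a)).toReal ≤ (υ (Set.Ico 0 b)).toReal :=
      ENNReal.toReal_mono hBfin (measure_mono (Set.Ico_subset_Ico_right hab))
    rw [Real.volume_Ico, harith, ENNReal.ofReal_add (by linarith) (by linarith),
      ENNReal.ofReal_add (by linarith) hint_nn, hqint a b ha hab hbx,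
      ENNReal.ofReal_sub _ ENNReal.toReal_nonneg, ENNReal.ofReal_toReal hBfin,
      ENNReal.ofReal_toReal hAfin, hdiff]
  -- ### ξ is monotone, hence measurable
  have hξmono : Monotone ξ := by
    intro s s' hss'
    rw [hξ s, hξ s']
    rcases Set.eq_empty_or_nonempty {y : ℝ | 0 ≤ y ∧ ENNReal.ofReal y < L ∧ σ y ≤ s} with
      he | hne
    · rw [he, Real.sSup_empty]
      rcases Set.eq_empty_or_nonempty {y : ℝ | 0 ≤ y ∧ ENNReal.ofReal y < L ∧ σ y ≤ s'} with
        he' | hne'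
      · rw [he', Real.sSup_empty]
      · obtain ⟨y, hy⟩ := hne'
        exact le_trans hy.1 (le_csSup (hbdd s') hy)
    · exact csSup_le_csSup (hbdd s') hne
        (fun y hy => ⟨hy.1, hy.2.1, hy.2.2.trans hss'⟩)
  have hξmeas : Measurable ξ := hξmono.measurable
  -- ### finiteness instances
  have hwdfin : wd Set.univ < ⊤ := by
    rw [hwddef, withDensity_apply _ MeasurableSet.univ]
    have h0 : (volume.restrict (Set.Ioc 0 x)).restrict Set.univ = volume.restrict (Set.Ioc 0 x) :=
      Measure.restrict_univ
    rw [h0, hqint 0 x le_rfl hx0 le_rfl]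
    exact ENNReal.ofReal_lt_top
  haveI hmfin : IsFiniteMeasure m := by
    constructor
    rw [hmdef]
    simp only [Measure.add_apply]
    have h1 : volume.restrict (Set.Ico 0 x) Set.univ < ⊤ := by
      rw [Measure.restrict_apply MeasurableSet.univ]
      simp [Real.volume_Ico]
    have h3 : υ.restrict (Set.Ico 0 x) Set.univ < ⊤ := by
      rw [Measure.restrict_apply MeasurableSet.univ]
      simpa using hυ x hx0 hxL
    exact ENNReal.add_lt_top.2 ⟨ENNReal.add_lt_top.2 ⟨h1, hwdfin⟩, h3⟩
  haveI hmapfin : IsFiniteMeasure (Measure.map ξ ν) := by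
    constructor
    rw [Measure.map_apply hξmeas MeasurableSet.univ]
    simp only [Set.preimage_univ, hνdef, Measure.restrict_apply MeasurableSet.univ,
      Set.univ_inter, Real.volume_Ico]
    exact ENNReal.ofReal_lt_top
  -- ### the pushforward identity
  have hmap : Measure.map ξ ν = m := by
    apply Measure.ext_of_Ico
    intro a b hab
    rw [Measure.map_apply hξmeas measurableSet_Ico, hνdef,
      Measure.restrict_apply (hξmeas measurableSet_Ico)]
    have hm_apply : m (Set.Ico a b) =
        volume (Set.Ico a b ∩ Set.Ico 0 x) +
        (∫⁻ t in Set.Ico a b ∩ Set.Ioc 0 x, ENNReal.ofReal (q t)) +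
        υ (Set.Ico a b ∩ Set.Ico 0 x) := by
      rw [hmdef]
      simp only [Measure.add_apply]
      rw [Measure.restrict_apply measurableSet_Ico, Measure.restrict_apply measurableSet_Ico,
        hwddef, withDensity_apply _ measurableSet_Ico,
        Measure.restrict_restrict measurableSet_Ico]
    rcases le_or_gt b 0 with hb0 | hb0
    · -- b ≤ 0 : everything empty
      have h1 : ξ ⁻¹' Set.Ico a b ∩ Set.Ico 0 (σ x) = ∅ := by
        ext t
        simp only [Set.mem_inter_iff, Set.mem_preimage, Set.mem_Ico, Set.mem_empty_iff_false,
          iff_false, not_and, and_imp]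
        intro _ h2 h3 _
        exact absurd (lt_of_lt_of_le h2 hb0) (not_lt.2 (hξ0 t h3))
      have h2 : Set.Ico a b ∩ Set.Ico 0 x = ∅ := by
        ext t
        simp only [Set.mem_inter_iff, Set.mem_Ico, Set.mem_empty_iff_false, iff_false, not_and,
          and_imp]
        intro _ h2 h3
        exact absurd (lt_of_lt_of_le h2 hb0) (not_lt.2 h3)
      have h3 : Set.Ico a b ∩ Set.Ioc 0 x = ∅ := by
        ext t
        simp only [Set.mem_inter_iff, Set.mem_Ico, Set.mem_Ioc, Set.mem_empty_iff_false,
          iff_false, not_and, and_imp]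
        intro _ h2 h3
        exact absurd (lt_of_lt_of_le h2 hb0) (not_lt.2 h3.le)
      rw [h1, hm_apply, h2, h3]
      simp
    rcases le_or_gt x a with hxa | hxa
    · -- x ≤ a : everything empty
      have h1 : ξ ⁻¹' Set.Ico a b ∩ Set.Ico 0 (σ x) = ∅ := by
        ext t
        simp only [Set.mem_inter_iff, Set.mem_preimage, Set.mem_Ico, Set.mem_empty_iff_false,
          iff_false, not_and, and_imp]
        intro h1 _ h3 h4
        exact absurd (lt_of_le_of_lt (hxa.trans h1) (hξ_lt_x t h3 h4)) (lt_irrefl _)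
      have h2 : Set.Ico a b ∩ Set.Ico 0 x = ∅ := by
        ext t
        simp only [Set.mem_inter_iff, Set.mem_Ico, Set.mem_empty_iff_false, iff_false, not_and,
          and_imp]
        intro h1 _ _ h4
        exact absurd (lt_of_le_of_lt (hxa.trans h1) h4) (lt_irrefl _)
      have h3 : (∫⁻ t in Set.Ico a b ∩ Set.Ioc 0 x, ENNReal.ofReal (q t)) = 0 := by
        apply setLIntegral_measure_zero
        refine measure_mono_null (fun t ht => ?_) (measure_singleton x)
        exact Set.mem_singleton_iff.2 (le_antisymm ht.2.2 (hxa.trans ht.1.1))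
      rw [h1, hm_apply, h2, h3]
      simp
    · -- main case : a < x, 0 < b
      set a' : ℝ := max a 0 with ha'def
      set b' : ℝ := min b x with hb'def
      have ha'0 : 0 ≤ a' := le_max_right _ _
      have ha'x : a' ≤ x := max_le hxa.le hx0
      have hb'0 : 0 < b' := lt_min hb0 hxpos
      have hb'x : b' ≤ x := min_le_right _ _
      have ha'b' : a' ≤ b' := max_le (le_min hab.le hxa.le) (le_min hb0.le hx0)
      have hσa'0 : 0 ≤ σ a' := ha'0.trans (hσge a' ha'0)
      have hσb'x : σ b' ≤ σ x := hσmono b' x hb'0.le hb'x hxL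
      -- the preimage identity
      have hset : ξ ⁻¹' Set.Ico a b ∩ Set.Ico 0 (σ x) = Set.Ico (σ a') (σ b') := by
        ext t
        simp only [Set.mem_inter_iff, Set.mem_preimage, Set.mem_Ico]
        constructor
        · rintro ⟨⟨h1, h2⟩, h3, h4⟩
          refine ⟨?_, ?_⟩
          · -- σ a' ≤ t
            rcases eq_or_lt_of_le ha'0 with h | h
            · rw [← h, hσz]; exact h3
            · exact hξ_le t a' h3 h ha'x (max_le h1 (hξ0 t h3))
          · -- t < σ b'
            by_contra hc
            push_neg at hc
            have := hξ_ge t b' hb'0.le (hmemL b' hb'x) hc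
            have hξb : ξ t < b' := lt_min h2 (hξ_lt_x t h3 h4)
            exact absurd this (not_le.2 hξb)
        · rintro ⟨h1, h2⟩
          have ht0 : 0 ≤ t := hσa'0.trans h1
          have htσx : t < σ x := lt_of_lt_of_le h2 hσb'x
          have hξa' : a' ≤ ξ t := hξ_ge t a' ha'0 (hmemL a' ha'x) h1
          refine ⟨⟨(le_max_left a 0).trans hξa', ?_⟩, ht0, htσx⟩
          by_contra hc
          push_neg at hc
          have hb'ξ : b' ≤ ξ t := min_le_of_left_le hc
          exact absurd (hξ_le t b' ht0 hb'0 hb'x hb'ξ) (not_le.2 h2)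
      rw [hset, hm_apply]
      have hIcoIco : Set.Ico a b ∩ Set.Ico 0 x = Set.Ico a' b' := by
        rw [Set.Ico_inter_Ico]
      have hIocEq : (∫⁻ t in Set.Ico a b ∩ Set.Ioc 0 x, ENNReal.ofReal (q t)) =
          ∫⁻ t in Set.Ioc a' b', ENNReal.ofReal (q t) := by
        apply setLIntegral_congr
        rw [MeasureTheory.ae_eq_set]
        constructor
        · refine measure_mono_null (fun t ht => ?_) (measure_singleton a')
          obtain ⟨⟨⟨h1, h2⟩, h3, h4⟩, h5⟩ := ht
          simp only [Set.mem_Ioc, not_and, not_le] at h5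
          have ha't : a' ≤ t := max_le h1 h3.le
          have ht2 : t ≤ b' := le_min h2.le h4
          rw [Set.mem_singleton_iff]
          by_contra hne
          exact absurd (h5 (lt_of_le_of_ne ha't (Ne.symm hne))) (not_lt.2 ht2)
        · refine measure_mono_null (fun t ht => ?_) (measure_singleton b')
          obtain ⟨⟨h1, h2⟩, h3⟩ := ht
          have hbt : b ≤ t := by
            by_contra hc
            push_neg at hc
            exact h3 ⟨⟨(le_max_left a 0).trans h1.le, hc⟩,
              lt_of_le_of_lt (le_max_right a 0) h1, h2.trans (min_le_right b x)⟩
          exact Set.mem_singleton_iff.2 (le_antisymm h2 ((min_le_left b x).trans hbt))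
      rw [hIcoIco, hIocEq, Real.volume_Ico, Real.volume_Ico]
      have hk := hkey a' b' ha'0 ha'b' hb'x
      rwa [Real.volume_Ico] at hk
  -- ### transfer of integrals
  have hsubIcc : Set.Icc 0 x ⊆ {t : ℝ | 0 ≤ t ∧ ENNReal.ofReal t < L} :=
    fun t ht => ⟨ht.1, hmemL t ht.2⟩
  have hFIcc : ContinuousOn F (Set.Icc 0 x) := hFc.mono hsubIcc
  obtain ⟨C, hC⟩ := isCompact_Icc.exists_bound_of_continuousOn hFIcc
  have hFIco : ContinuousOn F (Set.Ico 0 x) := hFIcc.mono Set.Ico_subset_Icc_self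
  have hFIoc : ContinuousOn F (Set.Ioc 0 x) := hFIcc.mono Set.Ioc_subset_Icc_self
  have hFsmIco : AEStronglyMeasurable F (volume.restrict (Set.Ico 0 x)) :=
    hFIco.aestronglyMeasurable measurableSet_Ico
  have hFsmIoc : AEStronglyMeasurable F (volume.restrict (Set.Ioc 0 x)) :=
    hFIoc.aestronglyMeasurable measurableSet_Ioc
  have hFsmwd : AEStronglyMeasurable F wd :=
    hFsmIoc.mono_ac (withDensity_absolutelyContinuous _ _)
  have hFsmυ : AEStronglyMeasurable F (υ.restrict (Set.Ico 0 x)) :=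
    hFIco.aestronglyMeasurable measurableSet_Ico
  have hFm : AEStronglyMeasurable F m := by
    rw [hmdef]
    exact aestronglyMeasurable_add_measure_iff.2
      ⟨aestronglyMeasurable_add_measure_iff.2 ⟨hFsmIco, hFsmwd⟩, hFsmυ⟩
  -- integrability
  haveI : IsFiniteMeasure wd := ⟨hwdfin⟩
  haveI : IsFiniteMeasure (υ.restrict (Set.Ico 0 x)) := by
    constructor
    rw [Measure.restrict_apply MeasurableSet.univ]
    simpa using hυ x hx0 hxL
  have hI1 : Integrable F (volume.restrict (Set.Ico 0 x)) :=
    hFIcc.integrableOn_Icc.mono_set Set.Ico_subset_Icc_self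
  have haebound : ∀ᵐ t ∂(volume.restrict (Set.Ioc 0 x)), ‖F t‖ ≤ C := by
    filter_upwards [ae_restrict_mem measurableSet_Ioc] with t ht
    exact hC t ⟨ht.1.le, ht.2⟩
  have hI2 : Integrable F wd :=
    Integrable.mono' (integrable_const C) hFsmwd
      ((withDensity_absolutelyContinuous _ _).ae_le haebound)
  have hI3 : Integrable F (υ.restrict (Set.Ico 0 x)) := by
    refine Integrable.mono' (integrable_const C) hFsmυ ?_
    filter_upwards [ae_restrict_mem measurableSet_Ico] with t ht
    exact hC t ⟨ht.1, ht.2.le⟩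
  have hsum : ∫ y, F y ∂m = (∫ y, F y ∂(volume.restrict (Set.Ico 0 x)) + ∫ y, F y ∂wd)
      + ∫ y, F y ∂(υ.restrict (Set.Ico 0 x)) := by
    rw [hmdef, integral_add_measure (hI1.add_measure hI2) hI3, integral_add_measure hI1 hI2]
  have hwdint : ∫ y, F y ∂wd = ∫ t in Set.Ioc 0 x, w t ^ 2 * F t := by
    rw [hwddef]
    have hmeasq : Measurable (fun t => (q t).toNNReal) := measurable_real_toNNReal.comp hq
    have h1 : (fun t => ENNReal.ofReal (q t)) = (fun t => ((q t).toNNReal : ℝ≥0∞)) := rfl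
    rw [h1, integral_withDensity_eq_integral_smul hmeasq]
    apply integral_congr_ae
    filter_upwards [hqae] with t ht
    rw [← ht]
    simp [NNReal.smul_def, Real.coe_toNNReal _ (sq_nonneg (w t))]
  have hIcoint : ∫ y, F y ∂(volume.restrict (Set.Ico 0 x)) = ∫ t in Set.Ioc 0 x, F t := by
    rw [integral_Ico_eq_integral_Ioo, integral_Ioc_eq_integral_Ioo]
  have hwF : Integrable (fun t => w t ^ 2 * F t) (volume.restrict (Set.Ioc 0 x)) := by
    refine Integrable.mono' (hwx.const_mul C) (hwx.aestronglyMeasurable.mul hFsmIoc) ?_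
    filter_upwards [ae_restrict_mem measurableSet_Ioc] with t ht
    rw [norm_mul, Real.norm_of_nonneg (sq_nonneg (w t)), mul_comm C (w t ^ 2)]
    exact mul_le_mul_of_nonneg_left (hC t ⟨ht.1.le, ht.2⟩) (sq_nonneg (w t))
  have hFIocInt : Integrable F (volume.restrict (Set.Ioc 0 x)) :=
    hFIcc.integrableOn_Icc.mono_set Set.Ioc_subset_Icc_self
  have hcomb : (∫ t in Set.Ioc 0 x, F t) + (∫ t in Set.Ioc 0 x, w t ^ 2 * F t) =
      ∫ t in (0:ℝ)..x, F t * (1 + w t ^ 2) := by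
    rw [intervalIntegral.integral_of_le hx0, ← integral_add hFIocInt hwF]
    apply integral_congr_ae
    filter_upwards with t
    ring
  have hLHS : ∫ t in (0:ℝ)..(σ x), F (ξ t) = ∫ t, F (ξ t) ∂ν := by
    rw [hνdef, intervalIntegral.integral_of_le hσx0, integral_Ioc_eq_integral_Ioo,
      ← integral_Ico_eq_integral_Ioo]
  have hmapint : ∫ t, F (ξ t) ∂ν = ∫ y, F y ∂m := by
    rw [← hmap]
    exact (integral_map hξmeas.aemeasurable (by rw [hmap]; exact hFm)).symm
  rw [hLHS, hmapint, hsum, hIcoint, hwdint, hcomb]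
end

section
/- With ξ, σ, w as above, define for almost every s ∈ [0, ∞) the 2×2 matrix H(s) with entries H₁₁(s) = 1 − ξ'(s), H₁₂(s) = H₂₁(s) = ξ'(s)·w(ξ(s)), H₂₂(s) = ξ'(s). Then H(s) is symmetric, has trace 1, and is positive semidefinite for almost all s ∈ [0, ∞). -/
open MeasureTheory Set Matrix
open scoped ENNReal NNReal

open Filter
open scoped Topology

lemma aux_tendsto_right {f : ℝ → ℝ} {s d : ℝ} (hd : HasDerivAt f d s) :
    Tendsto (fun h => (f (s + h) - f s) / h) (𝓝[>] (0:ℝ)) (𝓝 d) := by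
  have h1 : Tendsto (slope f s) (𝓝[≠] s) (𝓝 d) := hasDerivAt_iff_tendsto_slope.mp hd
  have h2 : Tendsto (fun h : ℝ => s + h) (𝓝[>] (0:ℝ)) (𝓝[≠] s) := by
    apply tendsto_nhdsWithin_of_tendsto_nhds_of_eventually_within
    · simpa using ((continuous_add_left s).tendsto (0:ℝ)).mono_left
        nhdsWithin_le_nhds
    · filter_upwards [self_mem_nhdsWithin] with h (hh : 0 < h)
      simp only [mem_compl_iff, mem_singleton_iff]
      intro hc; nlinarith [hc]
  have := h1.comp h2
  apply this.congr
  intro h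
  simp [slope, vsub_eq_sub]
  ring_nf

lemma aux_deriv_zero_of_constant_right {f : ℝ → ℝ} {s h₀ : ℝ} (hmono : Monotone f)
    (hh₀ : 0 < h₀) (hc : f (s + h₀) = f s) (hd : DifferentiableAt ℝ f s) : deriv f s = 0 := by
  have ht := aux_tendsto_right hd.hasDerivAt
  have h0 : Tendsto (fun _ : ℝ => (0:ℝ)) (𝓝[>] (0:ℝ)) (𝓝 (0:ℝ)) := tendsto_const_nhds
  have : (fun h : ℝ => (f (s + h) - f s) / h) =ᶠ[𝓝[>] (0:ℝ)] fun _ => (0:ℝ) := by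
    filter_upwards [Ioo_mem_nhdsGT_of_mem (by constructor <;> [rfl; exact hh₀] :
      (0:ℝ) ∈ Ico 0 h₀)] with h hh
    have h1 : f s ≤ f (s + h) := hmono (by linarith [hh.1])
    have h2 : f (s + h) ≤ f (s + h₀) := hmono (by linarith [hh.2])
    rw [hc] at h2
    have : f (s + h) = f s := le_antisymm h2 h1
    simp [this]
  exact tendsto_nhds_unique (ht.congr' this) h0

lemma aux_deriv_mem_Icc {f : ℝ → ℝ} {s : ℝ} (hmono : Monotone f)
    (hlip : ∀ a b : ℝ, a ≤ b → f b - f a ≤ b - a) (hd : DifferentiableAt ℝ f s) :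
    deriv f s ∈ Set.Icc (0:ℝ) 1 := by
  have ht := aux_tendsto_right hd.hasDerivAt
  have hub : ∀ᶠ h in 𝓝[>] (0:ℝ), (f (s + h) - f s) / h ≤ 1 := by
    filter_upwards [self_mem_nhdsWithin] with h (hh : 0 < h)
    rw [div_le_one hh]
    have := hlip s (s + h) (by linarith)
    linarith
  have hlb : ∀ᶠ h in 𝓝[>] (0:ℝ), 0 ≤ (f (s + h) - f s) / h := by
    filter_upwards [self_mem_nhdsWithin] with h (hh : 0 < h)
    have h2 := hmono (show s ≤ s + h by linarith)
    apply div_nonneg (by linarith) hh.le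
  exact ⟨ge_of_tendsto ht hlb, le_of_tendsto ht hub⟩

lemma aux_null_preimage {f : ℝ → ℝ} (hf : Continuous f) (hmono : Monotone f)
    {N : Set ℝ} (hN : volume N = 0) :
    ∀ᵐ s, ¬(DifferentiableAt ℝ f s ∧ 0 < deriv f s ∧ f s ∈ N) := by
  obtain ⟨N', hNN', hN'meas, hN'0⟩ := exists_measurable_superset_of_null hN
  set B : Set ℝ := {s | DifferentiableAt ℝ f s} ∩ {s | 0 < deriv f s} ∩ f ⁻¹' N' with hB
  have hBmeas : MeasurableSet B := by
    refine (MeasurableSet.inter ?_ ?_).inter (hN'meas.preimage hf.measurable)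
    · exact measurableSet_of_differentiableAt ℝ f
    · exact measurableSet_lt measurable_const (measurable_deriv f)
  have hinj : InjOn f B := by
    intro a ha b hb hab
    by_contra hne
    wlog hlt : a < b generalizing a b
    · exact this hb ha hab.symm (Ne.symm hne) (lt_of_le_of_ne (not_lt.mp hlt) (Ne.symm hne))
    have hconst : f (a + (b - a)) = f a := by
      rw [show a + (b - a) = b by ring, hab]
    have := aux_deriv_zero_of_constant_right hmono (by linarith) hconst ha.1.1
    have h2 : (0:ℝ) < deriv f a := ha.1.2
    rw [this] at h2; exact lt_irrefl 0 h2
  have hder : ∀ s ∈ B, HasFDerivWithinAt f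
      ((1 : ℝ →L[ℝ] ℝ).smulRight (deriv f s)) B s := fun s hs =>
    (hs.1.1.hasDerivAt.hasFDerivAt).hasFDerivWithinAt
  have hle := lintegral_abs_det_fderiv_le_addHaar_image volume hBmeas hder hinj
  have himg : volume (f '' B) = 0 := by
    refine measure_mono_null ?_ hN'0
    rintro _ ⟨s, hs, rfl⟩
    exact hs.2
  rw [himg, le_zero_iff] at hle
  simp only [ContinuousLinearMap.det_smulRight, ContinuousLinearMap.one_apply, one_mul] at hle
  have hmeas2 : Measurable fun s => ENNReal.ofReal |deriv f s| :=
    ((measurable_deriv f).abs).ennreal_ofReal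
  have h1 : ∀ᵐ x, x ∈ B → ENNReal.ofReal |deriv f x| = 0 :=
    (setLIntegral_eq_zero_iff hBmeas hmeas2).mp hle
  have hB0 : volume B = 0 := by
    rw [measure_eq_zero_iff_ae_notMem]
    filter_upwards [h1] with s hs hsB
    have h0 := hs hsB
    have : 0 < deriv f s := hsB.1.2
    rw [ENNReal.ofReal_eq_zero, abs_of_pos this] at h0
    linarith
  filter_upwards [measure_eq_zero_iff_ae_notMem.mp hB0] with s hs hcon
  exact hs ⟨⟨hcon.1, hcon.2.1⟩, hNN' hcon.2.2⟩

def LebAt (g : ℝ → ℝ) (x : ℝ) : Prop :=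
  ∀ (cen δ : ℝ → ℝ), Tendsto δ (𝓝[>] (0:ℝ)) (𝓝[>] 0) →
    (∀ᶠ j in 𝓝[>] (0:ℝ), x ∈ Metric.closedBall (cen j) (1 * δ j)) →
    Tendsto (fun j => ⨍ y in Metric.closedBall (cen j) (δ j), g y) (𝓝[>] (0:ℝ)) (𝓝 (g x))

lemma aux_leb {g : ℝ → ℝ} (hg : Integrable g) : ∀ᵐ x, LebAt g x := by
  filter_upwards [IsUnifLocDoublingMeasure.ae_tendsto_average (μ := volume)
    hg.locallyIntegrable 1] with x hx
  intro cen δ h1 h2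
  exact hx cen δ h1 h2

lemma aux_avg {g : ℝ → ℝ} {x : ℝ} (hx : LebAt g x) {Δ : ℝ → ℝ}
    (hΔpos : ∀ᶠ h in 𝓝[>] (0:ℝ), 0 < Δ h) (hΔ0 : Tendsto Δ (𝓝[>] (0:ℝ)) (𝓝 0)) :
    Tendsto (fun h => (∫ y in Ioc x (x + Δ h), g y) / Δ h) (𝓝[>] (0:ℝ)) (𝓝 (g x)) := by
  have hδ : Tendsto (fun h => Δ h / 2) (𝓝[>] (0:ℝ)) (𝓝[>] 0) := by
    apply tendsto_nhdsWithin_of_tendsto_nhds_of_eventually_within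
    · simpa using hΔ0.div_const 2
    · filter_upwards [hΔpos] with h hh
      exact div_pos hh two_pos
  have hmem : ∀ᶠ j in 𝓝[>] (0:ℝ), x ∈ Metric.closedBall (x + Δ j / 2) (1 * (Δ j / 2)) := by
    filter_upwards [hΔpos] with h hh
    simp only [Metric.mem_closedBall, Real.dist_eq, one_mul]
    rw [abs_le]
    constructor <;> linarith
  have ht := hx (fun j => x + Δ j / 2) (fun j => Δ j / 2) hδ hmem
  apply ht.congr'
  filter_upwards [hΔpos] with h hh
  have hball : Metric.closedBall (x + Δ h / 2) (Δ h / 2) = Icc x (x + Δ h) := by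
    rw [Real.closedBall_eq_Icc]
    congr 1 <;> ring
  rw [hball, setAverage_eq, MeasureTheory.integral_Icc_eq_integral_Ioc, Real.volume_real_Icc,
    show x + Δ h - x = Δ h by ring, max_eq_left hh.le, smul_eq_mul]
  rw [div_eq_inv_mul]

/-- The Hamiltonian `H(s) = !![1 - ξ'(s), ξ'(s) w(ξ(s)); ξ'(s) w(ξ(s)), ξ'(s)]` built from
the generalized inverse `ξ` of `σ(x) = x + ∫₀^x w² + υ([0,x))` is symmetric, trace normed
and positive semidefinite for almost every `s ∈ [0,∞)`. -/
theorem stmt_9 (L : ℝ≥0∞) (hL : 0 < L) (w : ℝ → ℝ) (υ : Measure ℝ)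
    (hw : ∀ x : ℝ, 0 ≤ x → ENNReal.ofReal x < L →
      IntegrableOn (fun t => w t ^ 2) (Set.Ioc 0 x) volume)
    (hυ : ∀ x : ℝ, 0 ≤ x → ENNReal.ofReal x < L → υ (Set.Ico 0 x) < ⊤)
    (σ ξ : ℝ → ℝ)
    (hσ : ∀ x : ℝ, σ x = x + (∫ t in (0:ℝ)..x, w t ^ 2) + (υ (Set.Ico 0 x)).toReal)
    (hξ : ∀ s : ℝ, ξ s = sSup {x : ℝ | 0 ≤ x ∧ ENNReal.ofReal x < L ∧ σ x ≤ s})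
    (H : ℝ → Matrix (Fin 2) (Fin 2) ℝ)
    (hH : ∀ s : ℝ, H s =
      !![1 - deriv ξ s, deriv ξ s * w (ξ s); deriv ξ s * w (ξ s), deriv ξ s]) :
    ∀ᵐ s ∂(volume.restrict (Set.Ici (0:ℝ))),
      (H s).IsSymm ∧ (H s).trace = 1 ∧ (H s).PosSemidef := by
  classical
  have hσ0 : σ 0 = 0 := by simp [hσ]
  have hσ_ge : ∀ x : ℝ, 0 ≤ x → x ≤ σ x := by
    intro x hx
    rw [hσ]
    have h1 : 0 ≤ ∫ t in (0:ℝ)..x, w t ^ 2 :=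
      intervalIntegral.integral_nonneg hx (fun t _ => sq_nonneg _)
    have h2 : (0:ℝ) ≤ (υ (Set.Ico 0 x)).toReal := ENNReal.toReal_nonneg
    linarith
  have hmemE : ∀ s : ℝ, 0 ≤ s →
      (0:ℝ) ∈ {x : ℝ | 0 ≤ x ∧ ENNReal.ofReal x < L ∧ σ x ≤ s} := by
    intro s hs
    exact ⟨le_refl _, by simpa using hL, by rw [hσ0]; exact hs⟩
  have hbdd : ∀ s : ℝ, BddAbove {x : ℝ | 0 ≤ x ∧ ENNReal.ofReal x < L ∧ σ x ≤ s} := by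
    intro s
    exact ⟨s, fun x hx => le_trans (hσ_ge x hx.1) hx.2.2⟩
  have hξmem_le : ∀ s x : ℝ, x ∈ {x : ℝ | 0 ≤ x ∧ ENNReal.ofReal x < L ∧ σ x ≤ s} →
      x ≤ ξ s := by
    intro s x hx
    rw [hξ]
    exact le_csSup (hbdd s) hx
  have hξ_nonneg : ∀ s : ℝ, 0 ≤ s → 0 ≤ ξ s := fun s hs => hξmem_le s 0 (hmemE s hs)
  have hξ_le : ∀ s : ℝ, 0 ≤ s → ξ s ≤ s := by
    intro s hs
    rw [hξ]
    exact csSup_le ⟨0, hmemE s hs⟩ (fun x hx => le_trans (hσ_ge x hx.1) hx.2.2)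
  have hξ_neg : ∀ s : ℝ, s < 0 → ξ s = 0 := by
    intro s hs
    have he : {x : ℝ | 0 ≤ x ∧ ENNReal.ofReal x < L ∧ σ x ≤ s} = ∅ := by
      ext x
      simp only [mem_setOf_eq, mem_empty_iff_false, iff_false, not_and]
      intro h1 _ h3
      have := hσ_ge x h1
      linarith
    rw [hξ, he, Real.sSup_empty]
  have hintF : ∀ a b : ℝ, 0 ≤ a → a ≤ b → ENNReal.ofReal b < L →
      IntervalIntegrable (fun t => w t ^ 2) volume a b := by
    intro a b ha hab hbL
    rw [intervalIntegrable_iff_integrableOn_Ioc_of_le hab]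
    exact (hw b (le_trans ha hab) hbL).mono_set (Ioc_subset_Ioc_left ha)
  have hσdiff : ∀ a b : ℝ, 0 ≤ a → a ≤ b → ENNReal.ofReal b < L →
      σ a + (b - a) + (∫ t in a..b, w t ^ 2) ≤ σ b := by
    intro a b ha hab hbL
    rw [hσ, hσ]
    have hsplit : (∫ t in (0:ℝ)..a, w t ^ 2) + (∫ t in a..b, w t ^ 2)
        = ∫ t in (0:ℝ)..b, w t ^ 2 :=
      intervalIntegral.integral_add_adjacent_intervals
        (hintF 0 a le_rfl ha (lt_of_le_of_lt (ENNReal.ofReal_le_ofReal hab) hbL))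
        (hintF a b ha hab hbL)
    have hυm : (υ (Set.Ico 0 a)).toReal ≤ (υ (Set.Ico 0 b)).toReal :=
      ENNReal.toReal_mono (hυ b (ha.trans hab) hbL).ne
        (measure_mono (Ico_subset_Ico_right hab))
    linarith
  have hFnonneg : ∀ a b : ℝ, a ≤ b → 0 ≤ ∫ t in a..b, w t ^ 2 :=
    fun a b hab => intervalIntegral.integral_nonneg hab (fun t _ => sq_nonneg _)
  have hlip : ∀ s t : ℝ, 0 ≤ s → s ≤ t → ξ t ≤ ξ s + (t - s) := by
    intro s t hs hst
    rw [hξ t]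
    apply csSup_le ⟨0, hmemE t (hs.trans hst)⟩
    intro x hx
    rcases le_or_gt x (t - s) with h | h
    · linarith [hξ_nonneg s hs]
    · have hy0 : (0:ℝ) ≤ x - (t - s) := by linarith
      have hyx : x - (t - s) ≤ x := by linarith
      have hd := hσdiff (x - (t - s)) x hy0 hyx hx.2.1
      have hFn := hFnonneg (x - (t - s)) x hyx
      have hymem : x - (t - s) ∈ {x : ℝ | 0 ≤ x ∧ ENNReal.ofReal x < L ∧ σ x ≤ s} := by
        refine ⟨hy0, lt_of_le_of_lt (ENNReal.ofReal_le_ofReal hyx) hx.2.1, ?_⟩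
        have := hx.2.2
        linarith
      have := hξmem_le s _ hymem
      linarith
  have hmono : Monotone ξ := by
    intro s t hst
    rcases lt_or_ge s 0 with h | h
    · rw [hξ_neg s h]
      rcases lt_or_ge t 0 with h' | h'
      · rw [hξ_neg t h']
      · exact hξ_nonneg t h'
    · rw [hξ s, hξ t]
      exact csSup_le_csSup (hbdd t) ⟨0, hmemE s h⟩
        (fun x hx => ⟨hx.1, hx.2.1, hx.2.2.trans hst⟩)
  have hlipfull : ∀ a b : ℝ, a ≤ b → ξ b - ξ a ≤ b - a := by
    intro a b hab
    rcases le_or_gt 0 a with h | h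
    · linarith [hlip a b h hab]
    · rw [hξ_neg a h]
      rcases le_or_gt 0 b with h' | h'
      · have := hξ_le b h'
        linarith
      · rw [hξ_neg b h']
        linarith
  have hlipW : LipschitzWith 1 ξ := by
    apply LipschitzWith.of_dist_le_mul
    intro a b
    rw [Real.dist_eq, Real.dist_eq, NNReal.coe_one, one_mul, abs_sub_le_iff]
    rcases le_total a b with h | h
    · rw [abs_of_nonpos (by linarith : a - b ≤ 0)]
      have h1 := hmono h
      have h2 := hlipfull a b h
      constructor <;> linarith
    · rw [abs_of_nonneg (by linarith : (0:ℝ) ≤ a - b)]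
      have h1 := hmono h
      have h2 := hlipfull b a h
      constructor <;> linarith
  have hcont : Continuous ξ := hlipW.continuous
  have hkey : ∀ s t c : ℝ, 0 ≤ s → s < t → ξ t ≤ c → 0 < c → ENNReal.ofReal c < L →
      ξ t - ξ s + ((∫ u in (0:ℝ)..(ξ t), w u ^ 2) - (∫ u in (0:ℝ)..(ξ s), w u ^ 2))
        ≤ t - s := by
    intro s t c hs hst htc hc hcL
    rcases eq_or_lt_of_le (hmono hst.le) with heq | hlt
    · rw [← heq]
      simp only [sub_self, add_zero]
      linarith
    · have hGcont : ContinuousOn (fun x : ℝ => x + ∫ u in (0:ℝ)..x, w u ^ 2) (Icc 0 c) := by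
        have hI : IntegrableOn (fun t => w t ^ 2) (uIcc 0 c) := by
          rw [uIcc_of_le hc.le, integrableOn_Icc_iff_integrableOn_Ioc]
          exact hw c hc.le hcL
        have h2 := intervalIntegral.continuousOn_primitive_interval (a := (0:ℝ)) (b := c) hI
        rw [uIcc_of_le hc.le] at h2
        exact (continuous_id.continuousOn).add h2
      set G : ℝ → ℝ := fun x : ℝ => x + ∫ u in (0:ℝ)..x, w u ^ 2 with hGdef
      by_contra hcon
      push_neg at hcon
      obtain ⟨ε, hεpos, heε⟩ : ∃ ε : ℝ, 0 < ε ∧ G (ξ t) - G (ξ s) = t - s + ε :=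
        ⟨G (ξ t) - G (ξ s) - (t - s), by simp only [hGdef]; linarith, by ring⟩
      have hξs_mem : ξ s ∈ Icc (0:ℝ) c := ⟨hξ_nonneg s hs, le_trans (hmono hst.le) htc⟩
      have hξt_mem : ξ t ∈ Icc (0:ℝ) c := ⟨hξ_nonneg t (hs.trans hst.le), htc⟩
      obtain ⟨δ₁, hδ₁pos, hδ₁⟩ :=
        Metric.continuousWithinAt_iff.mp (hGcont (ξ s) hξs_mem) (ε/2) (by linarith)
      obtain ⟨δ₂, hδ₂pos, hδ₂⟩ :=
        Metric.continuousWithinAt_iff.mp (hGcont (ξ t) hξt_mem) (ε/2) (by linarith)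
      have hne : Set.Nonempty {x : ℝ | 0 ≤ x ∧ ENNReal.ofReal x < L ∧ σ x ≤ t} :=
        ⟨0, hmemE t (hs.trans hst.le)⟩
      have hlt2 : max (ξ s) (ξ t - δ₂) < sSup {x : ℝ | 0 ≤ x ∧ ENNReal.ofReal x < L ∧ σ x ≤ t} := by
        rw [← hξ t]
        exact max_lt hlt (by linarith)
      obtain ⟨x', hx'mem, hx'gt⟩ := exists_lt_of_lt_csSup hne hlt2
      have hx'le : x' ≤ ξ t := hξmem_le t x' hx'mem
      have hxsx' : ξ s < x' := lt_of_le_of_lt (le_max_left _ _) hx'gt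
      obtain ⟨x, hx1, hx2⟩ := exists_between
        (show ξ s < min x' (ξ s + δ₁) from lt_min hxsx' (by linarith))
      have hxx' : x < x' := lt_of_lt_of_le hx2 (min_le_left _ _)
      have hx0 : (0:ℝ) ≤ x := le_trans (hξ_nonneg s hs) hx1.le
      have hxL : ENNReal.ofReal x < L :=
        lt_of_le_of_lt (ENNReal.ofReal_le_ofReal hxx'.le) hx'mem.2.1
      have hσx : s < σ x := by
        by_contra hle
        push_neg at hle
        exact absurd (hξmem_le s x ⟨hx0, hxL, hle⟩) (not_le.mpr hx1)
      have hd := hσdiff x x' hx0 hxx'.le hx'mem.2.1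
      have hineq : G x' - G x ≤ t - s := by
        have h1 : σ x' ≤ t := hx'mem.2.2
        have hsplit : (∫ u in (0:ℝ)..x, w u ^ 2) + (∫ u in x..x', w u ^ 2)
            = ∫ u in (0:ℝ)..x', w u ^ 2 :=
          intervalIntegral.integral_add_adjacent_intervals (hintF 0 x le_rfl hx0 hxL)
            (hintF x x' hx0 hxx'.le hx'mem.2.1)
        simp only [hGdef]
        linarith
      have hGx : |G x - G (ξ s)| < ε/2 := by
        have hxmem : x ∈ Icc (0:ℝ) c := ⟨hx0, le_trans hxx'.le (hx'le.trans htc)⟩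
        have hdist : dist x (ξ s) < δ₁ := by
          rw [Real.dist_eq, abs_of_pos (by linarith : (0:ℝ) < x - ξ s)]
          have := lt_of_lt_of_le hx2 (min_le_right _ _)
          linarith
        have := hδ₁ hxmem hdist
        rwa [Real.dist_eq] at this
      have hGx' : |G x' - G (ξ t)| < ε/2 := by
        have hx'memI : x' ∈ Icc (0:ℝ) c := ⟨hx'mem.1, hx'le.trans htc⟩
        have hdist : dist x' (ξ t) < δ₂ := by
          rw [Real.dist_eq, abs_of_nonpos (by linarith : x' - ξ t ≤ 0)]
          have h9 : ξ t - δ₂ ≤ max (ξ s) (ξ t - δ₂) := le_max_right _ _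
          have h10 : max (ξ s) (ξ t - δ₂) < x' := hx'gt
          linarith
        have := hδ₂ hx'memI hdist
        rwa [Real.dist_eq] at this
      have e1 := (abs_lt.mp hGx').1
      have e2 := (abs_lt.mp hGx).2
      simp only [hGdef] at e1 e2 heε hineq
      linarith
  -- cutoff sequence
  set c : ℕ → ℝ := fun n => if L = ⊤ then (n:ℝ) + 1 else L.toReal - L.toReal / ((n:ℝ) + 2)
    with hcdef
  have hLtop : L ≠ ⊤ → 0 < L.toReal := fun h => ENNReal.toReal_pos hL.ne' h
  have hcpos : ∀ n, 0 < c n := by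
    intro n
    simp only [hcdef]
    split_ifs with h
    · positivity
    · have h1 := hLtop h
      have h2 : L.toReal / ((n:ℝ) + 2) < L.toReal := by
        rw [div_lt_iff₀ (by positivity)]
        nlinarith [Nat.cast_nonneg (α := ℝ) n]
      linarith
  have hcL : ∀ n, ENNReal.ofReal (c n) < L := by
    intro n
    have hp := hcpos n
    simp only [hcdef] at hp ⊢
    split_ifs with h
    · rw [h]; exact ENNReal.ofReal_lt_top
    · rw [if_neg h] at hp
      rw [ENNReal.ofReal_lt_iff_lt_toReal hp.le h]
      have h1 := hLtop h
      have h2 : 0 < L.toReal / ((n:ℝ) + 2) := by positivity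
      linarith
  have hcarch : ∀ x : ℝ, 0 ≤ x → ENNReal.ofReal x < L → ∃ n, x < c n := by
    intro x hx hxL
    by_cases h : L = ⊤
    · obtain ⟨n, hn⟩ := exists_nat_gt x
      refine ⟨n, ?_⟩
      simp only [hcdef, if_pos h]
      push_cast
      linarith
    · have hxlt : x < L.toReal := by
        rwa [ENNReal.ofReal_lt_iff_lt_toReal hx h] at hxL
      obtain ⟨n, hn⟩ := exists_nat_gt (L.toReal / (L.toReal - x))
      refine ⟨n, ?_⟩
      simp only [hcdef, if_neg h]
      have h1 := hLtop h
      have h2 : L.toReal / ((n:ℝ) + 2) < L.toReal - x := by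
        rw [div_lt_iff₀ (by positivity)]
        have h3 : L.toReal / (L.toReal - x) < (n:ℝ) + 2 := by linarith
        rw [div_lt_iff₀ (by linarith)] at h3
        linarith
      linarith
  -- indicator functions and Lebesgue points
  set g : ℕ → ℝ → ℝ := fun n => (Ioo (0:ℝ) (c n)).indicator (fun t => w t ^ 2) with hgdef
  have hgint : ∀ n, Integrable (g n) := by
    intro n
    simp only [hgdef]
    rw [integrable_indicator_iff measurableSet_Ioo]
    exact (hw (c n) (hcpos n).le (hcL n)).mono_set Ioo_subset_Ioc_self
  have hleb : ∀ᵐ x, ∀ n, LebAt (g n) x := ae_all_iff.mpr (fun n => aux_leb (hgint n))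
  have hN : volume {x : ℝ | ¬ ∀ n, LebAt (g n) x} = 0 := hleb
  have hbad1 := aux_null_preimage hcont hmono hN
  have hbad0 : volume {s : ℝ | ξ s = 0 ∧ ∀ h : ℝ, 0 < h → ξ s < ξ (s + h)} = 0 := by
    apply Set.Subsingleton.measure_zero
    intro a ha b hb
    by_contra hne
    rcases lt_or_gt_of_ne hne with hab | hab
    · have h1 := ha.2 (b - a) (by linarith)
      rw [show a + (b - a) = b by ring, hb.1, ha.1] at h1
      exact lt_irrefl 0 h1
    · have h1 := hb.2 (a - b) (by linarith)
      rw [show b + (a - b) = a by ring, hb.1, ha.1] at h1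
      exact lt_irrefl 0 h1
  have hrad : ∀ᵐ s, DifferentiableAt ℝ ξ s := hlipW.ae_differentiableAt_of_real
  -- assemble
  filter_upwards [ae_restrict_mem measurableSet_Ici, ae_restrict_of_ae hrad,
    ae_restrict_of_ae hbad1, ae_restrict_of_ae (measure_eq_zero_iff_ae_notMem.mp hbad0)]
    with s hs hdiff hnb1 hnb0
  have hs' : (0:ℝ) ≤ s := hs
  have hd01 : deriv ξ s ∈ Set.Icc (0:ℝ) 1 := aux_deriv_mem_Icc hmono hlipfull hdiff
  have hmain : deriv ξ s = 0 ∨ deriv ξ s * (1 + w (ξ s) ^ 2) ≤ 1 := by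
    rcases eq_or_lt_of_le hd01.1 with h0 | hdpos
    · exact Or.inl h0.symm
    right
    have hstrict : ∀ h : ℝ, 0 < h → ξ s < ξ (s + h) := by
      intro h hh
      rcases lt_or_ge (ξ s) (ξ (s + h)) with h' | h'
      · exact h'
      · exfalso
        have hconst : ξ (s + h) = ξ s := le_antisymm h' (hmono (by linarith))
        have := aux_deriv_zero_of_constant_right hmono hh hconst hdiff
        rw [this] at hdpos
        exact lt_irrefl 0 hdpos
    have hξpos : 0 < ξ s := by
      rcases eq_or_lt_of_le (hξ_nonneg s hs') with h0 | h
      · exact absurd ⟨h0.symm, hstrict⟩ hnb0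
      · exact h
    have hξL : ENNReal.ofReal (ξ s) < L := by
      have h1 : ξ s < sSup {x : ℝ | 0 ≤ x ∧ ENNReal.ofReal x < L ∧ σ x ≤ s + 1} := by
        rw [← hξ (s + 1)]
        exact hstrict 1 one_pos
      obtain ⟨x', hx'mem, hx'gt⟩ :=
        exists_lt_of_lt_csSup ⟨0, hmemE (s + 1) (by linarith)⟩ h1
      exact lt_of_le_of_lt (ENNReal.ofReal_le_ofReal hx'gt.le) hx'mem.2.1
    obtain ⟨n, hn⟩ := hcarch (ξ s) hξpos.le hξL
    have hLeb : LebAt (g n) (ξ s) := by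
      by_contra hcon
      exact hnb1 ⟨hdiff, hdpos, fun hall => hcon (hall n)⟩
    have hΔpos : ∀ᶠ h in nhdsWithin (0:ℝ) (Ioi 0), 0 < ξ (s + h) - ξ s := by
      filter_upwards [self_mem_nhdsWithin] with h hh
      exact sub_pos.mpr (hstrict h hh)
    have hΔ0 : Tendsto (fun h : ℝ => ξ (s + h) - ξ s) (nhdsWithin (0:ℝ) (Ioi 0)) (nhds 0) := by
      have hc2 : Continuous fun h : ℝ => ξ (s + h) - ξ s :=
        (hcont.comp (continuous_const.add continuous_id)).sub continuous_const
      have := (hc2.tendsto 0).mono_left (nhdsWithin_le_nhds (s := Ioi (0:ℝ)))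
      simpa using this
    have hev : ∀ᶠ h in nhdsWithin (0:ℝ) (Ioi 0), ξ (s + h) < c n := by
      have h1 : ∀ᶠ y in nhds (0:ℝ), y < c n - ξ s := eventually_lt_nhds (by linarith)
      filter_upwards [hΔ0.eventually h1] with h hh
      linarith
    have hineq : ∀ᶠ h in nhdsWithin (0:ℝ) (Ioi 0),
        ((ξ (s + h) - ξ s) / h) *
          (1 + (∫ y in Ioc (ξ s) (ξ s + (ξ (s + h) - ξ s)), g n y) / (ξ (s + h) - ξ s)) ≤ 1 := by
      filter_upwards [self_mem_nhdsWithin, hΔpos, hev] with h hh hΔh hch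
      have hh' : (0:ℝ) < h := hh
      have hk := hkey s (s + h) (c n) hs' (by linarith) hch.le (hcpos n) (hcL n)
      have hIoc : Ioc (ξ s) (ξ s + (ξ (s + h) - ξ s)) = Ioc (ξ s) (ξ (s + h)) := by
        norm_num
      have hsub : Ioc (ξ s) (ξ (s + h)) ⊆ Ioo 0 (c n) := by
        intro y hy
        exact ⟨lt_of_le_of_lt hξpos.le hy.1, lt_of_le_of_lt hy.2 hch⟩
      have hgeq : ∫ y in Ioc (ξ s) (ξ (s + h)), g n y
          = ∫ y in Ioc (ξ s) (ξ (s + h)), w y ^ 2 := by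
        apply setIntegral_congr_fun measurableSet_Ioc
        intro y hy
        simp only [hgdef]
        exact indicator_of_mem (hsub hy) _
      have hξshL : ENNReal.ofReal (ξ (s + h)) < L :=
        lt_of_le_of_lt (ENNReal.ofReal_le_ofReal hch.le) (hcL n)
      have hFsplit : (∫ u in (0:ℝ)..(ξ s), w u ^ 2) + (∫ u in (ξ s)..(ξ (s + h)), w u ^ 2)
          = ∫ u in (0:ℝ)..(ξ (s + h)), w u ^ 2 :=
        intervalIntegral.integral_add_adjacent_intervals
          (hintF 0 (ξ s) le_rfl hξpos.le hξL)
          (hintF (ξ s) (ξ (s + h)) hξpos.le (hstrict h hh).le hξshL)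
      have hFi : ∫ u in (ξ s)..(ξ (s + h)), w u ^ 2
          = ∫ y in Ioc (ξ s) (ξ (s + h)), w y ^ 2 :=
        intervalIntegral.integral_of_le (hstrict h hh).le
      have hint_eq : ∫ y in Ioc (ξ s) (ξ s + (ξ (s + h) - ξ s)), g n y
          = (∫ u in (0:ℝ)..(ξ (s + h)), w u ^ 2) - (∫ u in (0:ℝ)..(ξ s), w u ^ 2) := by
        rw [hIoc, hgeq, ← hFi]
        linarith
      rw [div_mul_eq_mul_div, div_le_one hh']
      rw [mul_add, mul_one, mul_div_cancel₀ _ (ne_of_gt hΔh), hint_eq]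
      linarith
    have hT1 : Tendsto (fun h : ℝ => (ξ (s + h) - ξ s) / h) (nhdsWithin (0:ℝ) (Ioi 0))
        (nhds (deriv ξ s)) := aux_tendsto_right hdiff.hasDerivAt
    have hT2 := aux_avg hLeb hΔpos hΔ0
    have hgval : g n (ξ s) = w (ξ s) ^ 2 := by
      simp only [hgdef]
      exact indicator_of_mem (mem_Ioo.mpr ⟨hξpos, hn⟩) _
    have hlim := le_of_tendsto (hT1.mul (tendsto_const_nhds.add hT2)) hineq
    rw [hgval] at hlim
    exact hlim
  -- conclude
  rw [hH]
  have hd0 : 0 ≤ deriv ξ s := hd01.1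
  have hd1 : deriv ξ s ≤ 1 := hd01.2
  refine ⟨?_, ?_, ?_, ?_⟩
  · unfold Matrix.IsSymm
    ext i j
    fin_cases i <;> fin_cases j <;> simp
  · rw [Matrix.trace_fin_two_of]
    ring
  · unfold Matrix.IsHermitian
    ext i j
    fin_cases i <;> fin_cases j <;> simp
  · intro x
    simp only [Finsupp.sum_fintype, star_zero, zero_mul, mul_zero, add_zero, Finset.sum_const_zero, implies_true]
    simp only [Fin.sum_univ_two, star_trivial]
    have e00 : (!![1 - deriv ξ s, deriv ξ s * w (ξ s); deriv ξ s * w (ξ s), deriv ξ s]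
        : Matrix (Fin 2) (Fin 2) ℝ) 0 0 = 1 - deriv ξ s := by simp
    have e01 : (!![1 - deriv ξ s, deriv ξ s * w (ξ s); deriv ξ s * w (ξ s), deriv ξ s]
        : Matrix (Fin 2) (Fin 2) ℝ) 0 1 = deriv ξ s * w (ξ s) := by simp
    have e10 : (!![1 - deriv ξ s, deriv ξ s * w (ξ s); deriv ξ s * w (ξ s), deriv ξ s]
        : Matrix (Fin 2) (Fin 2) ℝ) 1 0 = deriv ξ s * w (ξ s) := by simp
    have e11 : (!![1 - deriv ξ s, deriv ξ s * w (ξ s); deriv ξ s * w (ξ s), deriv ξ s]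
        : Matrix (Fin 2) (Fin 2) ℝ) 1 1 = deriv ξ s := by simp
    simp only [Matrix.of_apply, Matrix.cons_val', Matrix.cons_val_zero, Matrix.cons_val_one,
      Matrix.empty_val', Matrix.cons_val_fin_one, Matrix.head_cons]
    rcases hmain with h0 | hq
    · rw [h0]
      nlinarith [sq_nonneg (x 0)]
    · nlinarith [mul_nonneg hd0 (sq_nonneg (w (ξ s) * x 0 + x 1)),
        mul_nonneg (by nlinarith : (0:ℝ) ≤ 1 - deriv ξ s - deriv ξ s * w (ξ s) ^ 2)
          (sq_nonneg (x 0))]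
end
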